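/- Define words by w_0 = a_0 and w_ℓ = w_{ℓ−1} a_ℓ w_{ℓ−1} for ℓ ≥ 1, and let A_k be the NFA with states {0, 1, …, k}, alphabet {a_0, a_1, …, a_k}, all states initial, accepting state 0, and transitions: i·a_j = {i} whenever k ≥ i > j ≥ 0, and i·a_i = {0, 1, …, i−1} whenever k ≥ i ≥ 1. Then for every k ≥ 0, every prefix of w_k of even length belongs to L(A_k), and every prefix of w_k of odd length ends with a_0 and does not belong to L(A_k). -/

import Mathlib

/-- `subk k w` is the set of scattered subwords of `w` of length at most `k`. -/
def subk {α : Type*} (k : ℕ) (w : List α) : Set (List α) :=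
  {u | u.length ≤ k ∧ u.Sublist w}

/-- Two words are `k`-equivalent if they have the same subwords of length at most `k`. -/
def kEquiv {α : Type*} (k : ℕ) (u v : List α) : Prop :=
  subk k u = subk k v

/-- A language is `k`-piecewise testable (Simon's characterization):
`k`-equivalent words are equi-members. -/
def IsPT {α : Type*} (k : ℕ) (L : Language α) : Prop :=
  ∀ u v : List α, kEquiv k u v → (u ∈ L ↔ v ∈ L)

/-- A DFA is minimal if all states are reachable and pairwise distinguishable. -/
def IsMinimalDFA {α σ : Type*} (A : DFA α σ) : Prop :=
  (∀ q : σ, ∃ w : List α, A.eval w = q) ∧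
  ∀ p q : σ,
    (∀ w : List α, (A.evalFrom p w ∈ A.accept ↔ A.evalFrom q w ∈ A.accept)) → p = q

/-- There is a simple path (pairwise distinct states) with `m` transitions in the DFA `A`. -/
def DFAHasSimplePath {α σ : Type*} (A : DFA α σ) (m : ℕ) : Prop :=
  ∃ (qs : Fin (m + 1) → σ) (as : Fin m → α),
    Function.Injective qs ∧ ∀ i : Fin m, A.step (qs i.castSucc) (as i) = qs i.succ

/-- The depth of a DFA: the number of transitions on a longest simple path. -/
noncomputable def dfaDepth {α σ : Type*} (A : DFA α σ) : ℕ :=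
  sSup {m | DFAHasSimplePath A m}

/-- There is a simple path (pairwise distinct states) with `m` transitions in the NFA `A`. -/
def NFAHasSimplePath {α σ : Type*} (A : NFA α σ) (m : ℕ) : Prop :=
  ∃ (qs : Fin (m + 1) → σ) (as : Fin m → α),
    Function.Injective qs ∧ ∀ i : Fin m, qs i.succ ∈ A.step (qs i.castSucc) (as i)

/-- The depth of an NFA: the number of transitions on a longest simple path. -/
noncomputable def nfaDepth {α σ : Type*} (A : NFA α σ) : ℕ :=
  sSup {m | NFAHasSimplePath A m}

/-- The NFA `A_k`: states `{0,…,k}`, alphabet `{a_0,…,a_k}` (both modeled by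
`Fin (k+1)`), all states initial, accepting state `0`, with `i·a_j = {i}` for
`i > j` and `i·a_i = {0,…,i-1}` for `i ≥ 1` (no other transitions). -/
def Ak (k : ℕ) : NFA (Fin (k + 1)) (Fin (k + 1)) where
  step := fun q a =>
    if a < q then {q} else if q = a ∧ 0 < q then {p | p < q} else ∅
  start := Set.univ
  accept := {0}

/-- The words `w_ℓ`: `w_0 = a_0` and `w_ℓ = w_{ℓ-1} a_ℓ w_{ℓ-1}`, with letter `a_i`
modeled by the natural number `i`. -/
def W : ℕ → List ℕ
  | 0 => [0]
  | l + 1 => W l ++ (l + 1) :: W l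

/-- The word `w_k` viewed as a word over the `(k+1)`-letter alphabet `Fin (k+1)`
(every letter of `w_k` is at most `k`, so the map `a ↦ a % (k+1)` is the identity
on the letters of `w_k`). -/
def WFin (k : ℕ) : List (Fin (k + 1)) :=
  (W k).map (fun a => ⟨a % (k + 1), Nat.mod_lt a k.succ_pos⟩)

section AuxStmt14

lemma W_le : ∀ l, ∀ a ∈ W l, a ≤ l := by
  intro l
  induction l with
  | zero => simp [W]
  | succ l ih =>
    intro a ha
    simp only [W, List.mem_append, List.mem_cons] at ha
    rcases ha with h | h | h
    · exact (ih a h).trans (Nat.le_succ l)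
    · omega
    · exact (ih a h).trans (Nat.le_succ l)

lemma W_len_odd : ∀ l, ∃ m, (W l).length = 2 * m + 1 := by
  intro l
  induction l with
  | zero => exact ⟨0, rfl⟩
  | succ l ih =>
    obtain ⟨m, hm⟩ := ih
    refine ⟨2 * m + 1, ?_⟩
    show (W l ++ (l + 1) :: W l).length = 2 * (2 * m + 1) + 1
    simp only [List.length_append, List.length_cons]
    omega

lemma W_even_zero : ∀ l i (h : i < (W l).length), Even i → (W l)[i] = 0 := by
  intro l
  induction l with
  | zero =>
    intro i h _
    have hi : i = 0 := by
      have h1 : i < 1 := h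
      omega
    subst hi
    rfl
  | succ l ih =>
    intro i h he
    obtain ⟨L, hL⟩ := W_len_odd l
    show (W l ++ (l + 1) :: W l)[i]'(by rw [show W (l + 1) = W l ++ (l + 1) :: W l from rfl] at h; exact h) = 0
    by_cases h1 : i < (W l).length
    · rw [List.getElem_append_left h1]
      exact ih i h1 he
    · push_neg at h1
      rw [List.getElem_append_right h1]
      have hne : i ≠ (W l).length := by
        obtain ⟨a, ha⟩ := he
        omega
      rw [List.getElem_cons, dif_neg (by omega)]
      apply ih
      obtain ⟨a, ha⟩ := he
      exact ⟨a - L - 1, by omega⟩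

lemma stepSet_mono' {α σ : Type*} (M : NFA α σ) {S T : Set σ} (h : S ⊆ T) (a : α) :
    M.stepSet S a ⊆ M.stepSet T a := by
  intro q hq
  rw [NFA.mem_stepSet] at hq ⊢
  obtain ⟨t, ht, h2⟩ := hq
  exact ⟨t, h ht, h2⟩

lemma evalFrom_mono' {α σ : Type*} (M : NFA α σ) {S T : Set σ} (h : S ⊆ T) (w : List α) :
    M.evalFrom S w ⊆ M.evalFrom T w := by
  induction w generalizing S T with
  | nil => exact h
  | cons a w ih => exact ih (stepSet_mono' M h a)

lemma evalFrom_append' {α σ : Type*} (M : NFA α σ) (S : Set σ) (u v : List α) :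
    M.evalFrom S (u ++ v) = M.evalFrom (M.evalFrom S u) v := by
  simp [NFA.evalFrom, List.foldl_append]

lemma Ak_stay (k : ℕ) (q : Fin (k + 1)) (w : List (Fin (k + 1))) (hw : ∀ a ∈ w, a < q) :
    ∀ (S : Set (Fin (k + 1))), q ∈ S → q ∈ (Ak k).evalFrom S w := by
  induction w with
  | nil => intro S hq; exact hq
  | cons a w ih =>
    intro S hq
    show q ∈ (Ak k).evalFrom ((Ak k).stepSet S a) w
    refine ih (fun b hb => hw b (List.mem_cons_of_mem a hb)) _ ?_
    rw [NFA.mem_stepSet]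
    refine ⟨q, hq, ?_⟩
    simp only [Ak, if_pos (hw a List.mem_cons_self)]
    rfl

lemma Ak_main (k : ℕ) : ∀ l, l ≤ k → ∀ p : List (Fin (k + 1)),
    p <+: (W l).map (fun a => (⟨a % (k + 1), Nat.mod_lt a k.succ_pos⟩ : Fin (k + 1))) →
    Even p.length → (0 : Fin (k + 1)) ∈ (Ak k).evalFrom {q | q.val ≤ l} p := by
  intro l
  induction l with
  | zero =>
    intro _ p hp he
    have hlen : p.length ≤ 1 := by
      have := hp.length_le
      simpa [W] using this
    have hp0 : p.length = 0 := by
      obtain ⟨a, ha⟩ := he; omega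
    rw [List.length_eq_zero_iff] at hp0
    subst hp0
    show (0 : Fin (k+1)) ∈ {q : Fin (k+1) | q.val ≤ 0}
    simp
  | succ l ih =>
    intro hlk p hp he
    have hfvgen : ∀ a : ℕ, a ≤ k →
        ((⟨a % (k + 1), Nat.mod_lt a k.succ_pos⟩ : Fin (k + 1)) : ℕ) = a := by
      intro a ha
      show a % (k + 1) = a
      exact Nat.mod_eq_of_lt (by omega)
    set f : ℕ → Fin (k + 1) := fun a => (⟨a % (k + 1), Nat.mod_lt a k.succ_pos⟩ : Fin (k + 1))
      with hf
    have hWmap : (W (l+1)).map f = (W l).map f ++ f (l + 1) :: (W l).map f := by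
      simp [show W (l+1) = W l ++ (l+1) :: W l from rfl]
    set u := (W l).map f with hu
    rw [hWmap] at hp
    have hsub : ({q : Fin (k+1) | q.val ≤ l} : Set _) ⊆ {q | q.val ≤ l + 1} :=
      fun q hq => Nat.le_succ_of_le hq
    have hfv : (f (l + 1) : ℕ) = l + 1 := hfvgen (l + 1) hlk
    by_cases hle : p.length ≤ u.length
    · have hpu : p <+: u :=
        List.prefix_of_prefix_length_le hp ⟨f (l+1) :: u, rfl⟩ hle
      exact evalFrom_mono' _ hsub p (ih (by omega) p hpu he)
    · push_neg at hle
      have hup : u <+: p :=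
        List.prefix_of_prefix_length_le ⟨f (l+1) :: u, rfl⟩ hp hle.le
      obtain ⟨r, hr⟩ := hup
      rw [← hr] at hp
      have hrpre : r <+: f (l + 1) :: u := (List.prefix_append_right_inj u).mp hp
      have hrne : r ≠ [] := by
        intro h0
        rw [h0, List.append_nil] at hr
        rw [hr] at hle
        exact lt_irrefl _ hle
      obtain ⟨a, r', rfl⟩ := List.exists_cons_of_ne_nil hrne
      rw [List.cons_prefix_cons] at hrpre
      obtain ⟨rfl, hr'u⟩ := hrpre
      have hulen : ∃ m, u.length = 2 * m + 1 := by
        rw [hu, List.length_map]; exact W_len_odd l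
      have hr'even : Even r'.length := by
        rw [← hr] at he
        simp only [List.length_append, List.length_cons] at he
        obtain ⟨m, hm⟩ := he
        obtain ⟨L, hL⟩ := hulen
        exact ⟨m - L - 1, by omega⟩
      have hsplit : (u ++ f (l+1) :: r') = (u ++ [f (l+1)]) ++ r' := by simp
      rw [← hr, hsplit, evalFrom_append']
      have hkey : ({q : Fin (k+1) | q.val ≤ l} : Set _) ⊆
          (Ak k).evalFrom {q | q.val ≤ l + 1} (u ++ [f (l+1)]) := by
        intro q hq
        have hq' : (q : ℕ) ≤ l := hq
        rw [NFA.evalFrom_append, NFA.evalFrom_singleton, NFA.mem_stepSet]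
        refine ⟨f (l + 1), ?_, ?_⟩
        · apply Ak_stay
          · intro b hb
            rw [hu, List.mem_map] at hb
            obtain ⟨c, hc, rfl⟩ := hb
            have hcl : c ≤ l := W_le l c hc
            have hcv : ((f c : Fin (k+1)) : ℕ) = c := hfvgen c (by omega)
            rw [Fin.lt_def]
            omega
          · show (f (l + 1) : ℕ) ≤ l + 1
            omega
        · have hnotlt : ¬ (f (l + 1) < f (l + 1)) := lt_irrefl _
          have hpos : (0 : Fin (k+1)) < f (l + 1) := by
            rw [Fin.lt_def, Fin.val_zero]
            omega
          show q ∈ (if f (l + 1) < f (l + 1) then ({f (l + 1)} : Set (Fin (k+1)))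
            else if f (l + 1) = f (l + 1) ∧ 0 < f (l + 1) then {p | p < f (l + 1)} else ∅)
          rw [if_neg hnotlt,
            if_pos (show f (l + 1) = f (l + 1) ∧ (0 : Fin (k+1)) < f (l + 1) from ⟨rfl, hpos⟩)]
          show (q : ℕ) < (f (l + 1) : ℕ)
          omega
      exact evalFrom_mono' _ hkey r' (ih (by omega) r' hr'u hr'even)

end AuxStmt14
lemma Ak_last_zero (k : ℕ) (p : List (Fin (k + 1))) (hp : p <+: WFin k)
    (ho : Odd p.length) : p.getLast? = some 0 := by
  have hne : p ≠ [] := by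
    rintro rfl
    simp [Nat.odd_iff] at ho
  rw [List.getLast?_eq_getLast hne, List.getLast_eq_getElem]
  have hpos : 0 < p.length := List.length_pos_iff.mpr hne
  have hidx : p.length - 1 < p.length := by omega
  rw [hp.getElem hidx]
  have hWlen : (WFin k).length = (W k).length := by simp [WFin]
  have hlt : p.length - 1 < (WFin k).length := lt_of_lt_of_le hidx hp.length_le
  have h2 : p.length - 1 < (W k).length := by omega
  have hmap : (WFin k)[p.length - 1]'hlt =
      (fun a => (⟨a % (k + 1), Nat.mod_lt a k.succ_pos⟩ : Fin (k + 1)))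
        ((W k)[p.length - 1]'h2) :=
    List.getElem_map _
  rw [hmap]
  have hz : (W k)[p.length - 1]'h2 = 0 := by
    apply W_even_zero
    obtain ⟨m, hm⟩ := ho
    exact ⟨m, by omega⟩
  rw [hz]
  congr 1

lemma Ak_reject_last_zero (k : ℕ) (p : List (Fin (k + 1))) (hne : p ≠ [])
    (hl : p.getLast hne = 0) : p ∉ (Ak k).accepts := by
  intro hacc
  rw [NFA.mem_accepts] at hacc
  obtain ⟨s, hs, hmem⟩ := hacc
  have hs0 : s = 0 := hs
  subst hs0
  rw [← List.dropLast_append_getLast hne, hl, NFA.evalFrom_append, NFA.evalFrom_singleton,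
    NFA.mem_stepSet] at hmem
  obtain ⟨t, _, ht⟩ := hmem
  simp only [Ak] at ht
  split_ifs at ht with h1 h2
  · have h0 : (0 : Fin (k+1)) = t := ht
    rw [← h0] at h1
    exact lt_irrefl _ h1
  · rw [h2.1] at h2
    exact lt_irrefl _ h2.2
  · exact ht

/-- Every prefix of `w_k` of even length belongs to `L(A_k)`; every prefix of odd
length ends with `a_0` and does not belong to `L(A_k)`. -/
theorem stmt14 (k : ℕ) :
    ∀ p : List (Fin (k + 1)), p <+: WFin k →
      (Even p.length → p ∈ (Ak k).accepts) ∧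
      (Odd p.length → p.getLast? = some 0 ∧ p ∉ (Ak k).accepts) := by
  intro p hp
  constructor
  · intro he
    rw [NFA.mem_accepts]
    refine ⟨0, rfl, ?_⟩
    have hmain := Ak_main k k le_rfl p hp he
    have huniv : ({q : Fin (k+1) | q.val ≤ k} : Set _) = (Ak k).start := by
      ext q
      simp only [Ak, Set.mem_univ, Set.mem_setOf_eq, iff_true]
      omega
    rw [← huniv]
    exact hmain
  · intro ho
    have hlast := Ak_last_zero k p hp ho
    refine ⟨hlast, ?_⟩
    have hne : p ≠ [] := by
      rintro rfl
      simp at hlast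
    apply Ak_reject_last_zero k p hne
    rw [List.getLast?_eq_getLast hne] at hlast
    exact Option.some_injective _ hlast
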